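/- Let H be a complex Hilbert space, let Q be a bounded linear operator on H, and let A₁,…,A_N and B₁,…,B_N be bounded linear operators on H such that ‖Σ_{j=1}^N A_j* A_j‖ ≤ 1, ‖Σ_{j=1}^N A_j A_j*‖ ≤ 1, ‖Σ_{j=1}^N B_j* B_j‖ ≤ 1 and ‖Σ_{j=1}^N B_j B_j*‖ ≤ 1. Then ‖Σ_{j=1}^N A_j Q B_j‖ ≤ ‖Q‖. -/

import Mathlib

set_option maxHeartbeats 1000000


open ContinuousLinearMap

local notation "⟪" x ", " y "⟫_ℂ" => @inner ℂ _ _ x y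

private lemma sum_norm_sq_le
    {H : Type*} [NormedAddCommGroup H] [InnerProductSpace ℂ H] [CompleteSpace H]
    {N : ℕ} (C : Fin N → (H →L[ℂ] H))
    (hC : ‖∑ j, adjoint (C j) * C j‖ ≤ 1) (x : H) :
    ∑ j, ‖C j x‖ ^ 2 ≤ ‖x‖ ^ 2 := by
  have heq : ∑ j, ‖C j x‖ ^ 2
      = RCLike.re (⟪x, (∑ j, adjoint (C j) * C j) x⟫_ℂ) := by
    rw [ContinuousLinearMap.sum_apply, inner_sum, map_sum]
    refine Finset.sum_congr rfl fun j _ => ?_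
    rw [show ((adjoint (C j) * C j) x) = adjoint (C j) (C j x) from rfl,
      adjoint_inner_right]
    exact norm_sq_eq_re_inner (𝕜 := ℂ) (C j x)
  rw [heq]
  calc RCLike.re (⟪x, (∑ j, adjoint (C j) * C j) x⟫_ℂ)
      ≤ ‖⟪x, (∑ j, adjoint (C j) * C j) x⟫_ℂ‖ := RCLike.re_le_norm _
    _ ≤ ‖x‖ * ‖(∑ j, adjoint (C j) * C j) x‖ := norm_inner_le_norm _ _
    _ ≤ ‖x‖ * (‖∑ j, adjoint (C j) * C j‖ * ‖x‖) := by
        gcongr; exact le_opNorm _ _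
    _ ≤ ‖x‖ * (1 * ‖x‖) := by gcongr
    _ = ‖x‖ ^ 2 := by ring

/-- If `‖Σ Aj* Aj‖ ≤ 1`, `‖Σ Aj Aj*‖ ≤ 1`, `‖Σ Bj* Bj‖ ≤ 1` and `‖Σ Bj Bj*‖ ≤ 1`,
then `‖Σ Aj Q Bj‖ ≤ ‖Q‖`. -/
theorem norm_sum_AQB_le
    {H : Type*} [NormedAddCommGroup H] [InnerProductSpace ℂ H] [CompleteSpace H]
    (N : ℕ) (Q : H →L[ℂ] H) (A B : Fin N → (H →L[ℂ] H))
    (hA1 : ‖∑ j, adjoint (A j) * A j‖ ≤ 1)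
    (hA2 : ‖∑ j, A j * adjoint (A j)‖ ≤ 1)
    (hB1 : ‖∑ j, adjoint (B j) * B j‖ ≤ 1)
    (hB2 : ‖∑ j, B j * adjoint (B j)‖ ≤ 1) :
    ‖∑ j, A j * Q * B j‖ ≤ ‖Q‖ := by
  have hA2' : ‖∑ j, adjoint (adjoint (A j)) * adjoint (A j)‖ ≤ 1 := by
    simpa [adjoint_adjoint] using hA2
  refine opNorm_le_bound _ (norm_nonneg Q) fun x => ?_
  set T := ∑ j, A j * Q * B j with hT
  clear_value T
  rcases eq_or_ne (T x) 0 with h | h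
  · rw [h, norm_zero]; positivity
  have hTpos : 0 < ‖T x‖ := norm_pos_iff.mpr h
  have key : ‖T x‖ ^ 2 ≤ ‖Q‖ * ‖x‖ * ‖T x‖ := by
    have h1 : ∑ j, ‖B j x‖ ^ 2 ≤ ‖x‖ ^ 2 := sum_norm_sq_le B hB1 x
    have h2 : ∑ j, ‖adjoint (A j) (T x)‖ ^ 2 ≤ ‖T x‖ ^ 2 :=
      sum_norm_sq_le (fun j => adjoint (A j)) hA2' (T x)
    have hCS : ∑ j, ‖B j x‖ * ‖adjoint (A j) (T x)‖ ≤ ‖x‖ * ‖T x‖ := by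
      have := Finset.sum_mul_sq_le_sq_mul_sq Finset.univ
        (fun j => ‖B j x‖) (fun j => ‖adjoint (A j) (T x)‖)
      have hle : (∑ j, ‖B j x‖ * ‖adjoint (A j) (T x)‖) ^ 2
          ≤ (‖x‖ * ‖T x‖) ^ 2 := by
        calc (∑ j, ‖B j x‖ * ‖adjoint (A j) (T x)‖) ^ 2
            ≤ (∑ j, ‖B j x‖ ^ 2) * ∑ j, ‖adjoint (A j) (T x)‖ ^ 2 := this
          _ ≤ ‖x‖ ^ 2 * ‖T x‖ ^ 2 := by
              gcongr
          _ = (‖x‖ * ‖T x‖) ^ 2 := by ring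
      have hnn : 0 ≤ ∑ j, ‖B j x‖ * ‖adjoint (A j) (T x)‖ :=
        Finset.sum_nonneg fun j _ => by positivity
      exact le_of_pow_le_pow_left₀ two_ne_zero (by positivity) hle
    calc ‖T x‖ ^ 2 = RCLike.re (⟪T x, T x⟫_ℂ) := norm_sq_eq_re_inner (𝕜 := ℂ) _
      _ ≤ ‖⟪T x, T x⟫_ℂ‖ := RCLike.re_le_norm _
      _ = ‖∑ j, ⟪Q (B j x), adjoint (A j) (T x)⟫_ℂ‖ := by
          congr 1
          nth_rewrite 1 [hT]
          rw [ContinuousLinearMap.sum_apply, sum_inner]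
          refine Finset.sum_congr rfl fun j _ => ?_
          rw [show ((A j * Q * B j) x) = A j (Q (B j x)) from rfl,
            ← adjoint_inner_right]
      _ ≤ ∑ j, ‖⟪Q (B j x), adjoint (A j) (T x)⟫_ℂ‖ := norm_sum_le _ _
      _ ≤ ∑ j, ‖Q‖ * (‖B j x‖ * ‖adjoint (A j) (T x)‖) := by
          refine Finset.sum_le_sum fun j _ => ?_
          calc ‖⟪Q (B j x), adjoint (A j) (T x)⟫_ℂ‖
              ≤ ‖Q (B j x)‖ * ‖adjoint (A j) (T x)‖ := norm_inner_le_norm _ _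
            _ ≤ ‖Q‖ * ‖B j x‖ * ‖adjoint (A j) (T x)‖ := by
                gcongr
                exact le_opNorm Q _
            _ = ‖Q‖ * (‖B j x‖ * ‖adjoint (A j) (T x)‖) := by ring
      _ = ‖Q‖ * ∑ j, ‖B j x‖ * ‖adjoint (A j) (T x)‖ := by
          rw [Finset.mul_sum]
      _ ≤ ‖Q‖ * (‖x‖ * ‖T x‖) := by gcongr
      _ = ‖Q‖ * ‖x‖ * ‖T x‖ := by ring
  nlinarith [key, hTpos]
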